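/- arXiv:1010.1510 — 2 statements merged into one kernel-verified Lean document; each statement's English description precedes it below -/
import Mathlib

section
/- Let d ≥ 1 be an integer, κ > 0, c > 2dκ, R ≥ 1, and let ξ : Q_R → [0,∞) be a potential with ξ(0) − max_{x ∈ Q_R, x ≠ 0} ξ(x) > c. For * ∈ {f, 0}, let e_1^{R,*} be the nonnegative ℓ²-normalized eigenfunction of H_R^* = κΔ_R^* + ξ corresponding to its largest eigenvalue. Then, with K := 1/(1 − 2dκ/c), for every x ∈ Q_R: e_1^{R,*}(x) ≤ K · exp(−|x|₁ · log(c/(2dκ))). -/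
open MeasureTheory ProbabilityTheory Filter Asymptotics Real Matrix
open scoped BigOperators ENNReal

noncomputable section

/-- The centered lattice cube `Q_R = [-⌈R⌉,⌈R⌉]^d ∩ ℤ^d`. -/
def cube (d : ℕ) (R : ℝ) : Finset (Fin d → ℤ) :=
  Fintype.piFinset fun _ => Finset.Icc (-(⌈R⌉ : ℤ)) ⌈R⌉

/-- The ℓ¹-norm on `ℤ^d`. -/
def norm1 {d : ℕ} (x : Fin d → ℤ) : ℤ := ∑ i, |x i|

/-- Number of nearest neighbours of `x` inside the cube `Q_R`. -/
def degIn (d : ℕ) (R : ℝ) (x : Fin d → ℤ) : ℕ :=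
  ((cube d R).filter fun y => norm1 (x - y) = 1).card

/-- The Anderson Hamiltonian `κ Δ_R^* + ξ` on `ℓ²(Q_R)`, with free boundary
conditions if `free = true` and zero boundary conditions if `free = false`,
written as a matrix.  Off-diagonal entries are `κ` for nearest neighbours in
the cube; the diagonal entry at `x` is `ξ(x) - κ·deg(x)` where `deg(x)` is the
number of neighbours of `x` inside the cube (free b.c.) resp. `2d` (zero b.c.,
i.e. the function is extended by `0` outside the cube). -/
def ham (d : ℕ) (κ R : ℝ) (ξ : (Fin d → ℤ) → ℝ) (free : Bool) :
    Matrix (cube d R) (cube d R) ℝ :=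
  Matrix.of fun x y =>
    (if norm1 ((x : Fin d → ℤ) - (y : Fin d → ℤ)) = 1 then κ else 0) +
    (if x = y then ξ (x : Fin d → ℤ) -
      κ * (if free then (degIn d R (x : Fin d → ℤ) : ℝ) else (2 * d : ℝ)) else 0)

/-- `λ_1^{R,*}(ξ)`, the largest eigenvalue of the Anderson Hamiltonian. -/
def lam1 (d : ℕ) (κ R : ℝ) (ξ : (Fin d → ℤ) → ℝ) (free : Bool) : ℝ :=
  sSup (spectrum ℝ (ham d κ R ξ free))

/-- `ξ^{(1)}_R`, the maximum of the potential over the cube `Q_R`. -/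
def xiMax (d : ℕ) (R : ℝ) (ξ : (Fin d → ℤ) → ℝ) : ℝ :=
  sSup (ξ '' (cube d R : Set (Fin d → ℤ)))

/-- `ξ̂_R`, the maximum of the potential over the punctured cube `Q_R \ {0}`. -/
def xiHat (d : ℕ) (R : ℝ) (ξ : (Fin d → ℤ) → ℝ) : ℝ :=
  sSup (ξ '' ((cube d R : Set (Fin d → ℤ)) \ {0}))

/-- `ξ^{(2)}_R`, the second largest value of the potential on the cube `Q_R`
(as the maximum over distinct pairs of sites of the minimum of the two values). -/
def xiSecond (d : ℕ) (R : ℝ) (ξ : (Fin d → ℤ) → ℝ) : ℝ :=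
  sSup ((fun p => min (ξ p.1) (ξ p.2)) ''
    ((cube d R).offDiag : Set ((Fin d → ℤ) × (Fin d → ℤ))))

/-- The box solution `u_R^*(t,·) = exp(t H_R^*) 𝟙` of the parabolic Anderson
problem on `Q_R` with initial condition `𝟙` (free b.c. if `free = true`,
zero b.c. if `free = false`), extended by `0` outside the cube. -/
def boxSol (d : ℕ) (κ : ℝ) (ξ : (Fin d → ℤ) → ℝ) (free : Bool) (R t : ℝ)
    (x : Fin d → ℤ) : ℝ :=
  if hx : x ∈ cube d R then
    ((NormedSpace.exp (t • ham d κ R ξ free)) *ᵥ (fun _ => 1)) ⟨x, hx⟩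
  else 0

/-- The Feynman–Kac solution of the PAM with homogeneous initial condition
`u_0 ≡ 1`: the increasing limit of the zero-boundary box solutions. -/
def pamSol (d : ℕ) (κ : ℝ) (ξ : (Fin d → ℤ) → ℝ) (t : ℝ) (x : Fin d → ℤ) : ℝ :=
  ⨆ n : ℕ, boxSol d κ ξ false (n + 1) t x

/-- The cumulant generating function `H(t) = log⟨exp(t ξ(0))⟩`. -/
def cgfH {Ω : Type*} [MeasurableSpace Ω] (P : Measure Ω)
    {d : ℕ} (ξ : Ω → (Fin d → ℤ) → ℝ) (t : ℝ) : ℝ :=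
  Real.log (∫ ω, Real.exp (t * ξ ω 0) ∂P)

/-- The tail of the potential: `F̄(h) = P(ξ(0) > h)`. -/
def tailP {Ω : Type*} [MeasurableSpace Ω] (P : Measure Ω)
    {d : ℕ} (ξ : Ω → (Fin d → ℤ) → ℝ) (h : ℝ) : ℝ :=
  (P {ω | h < ξ ω 0}).toReal

/-- Conditional probability `P(A|B) = P(A ∩ B)/P(B)`, as a real number. -/
def cPr {Ω : Type*} [MeasurableSpace Ω] (P : Measure Ω) (A B : Set Ω) : ℝ :=
  (P (A ∩ B)).toReal / (P B).toReal

/-- Conditional expectation `⟨X | B⟩ = ⟨X 1_B⟩ / P(B)`, as a real number. -/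
def cEx {Ω : Type*} [MeasurableSpace Ω] (P : Measure Ω) (X : Ω → ℝ) (B : Set Ω) : ℝ :=
  (∫ ω in B, X ω ∂P) / (P B).toReal

/-- A positive function is slowly varying at infinity. -/
def SlowlyVarying (L : ℝ → ℝ) : Prop :=
  ∀ lam : ℝ, 0 < lam → Tendsto (fun x => L (lam * x) / L x) atTop (nhds 1)

/-- The class `𝓕` of `C¹` functions `f` with `f(0) = 0`, `f' > 0` on `(0,∞)`,
which are regularly varying of some positive index `β`, `f(x) = x^β L(x)`,
with slowly varying part `L` non-decreasing or bounded away from `0` and `∞`. -/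
def MemF (f : ℝ → ℝ) : Prop :=
  ContDiff ℝ 1 f ∧ f 0 = 0 ∧ (∀ x > (0:ℝ), 0 < deriv f x) ∧
  ∃ β > (0:ℝ), ∃ L : ℝ → ℝ, SlowlyVarying L ∧
    (∀ x > (0:ℝ), f x = x ^ β * L x) ∧
    (MonotoneOn L (Set.Ioi 0) ∨ ∃ m M : ℝ, 0 < m ∧ ∀ x > (0:ℝ), m ≤ L x ∧ L x ≤ M)

/-- The class `𝒯` of `C¹` time-scale functions: `t(0) = 0`, `t' > 0` on
`(0,∞)` and `t(x) → ∞`. -/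
def MemT (τ : ℝ → ℝ) : Prop :=
  ContDiff ℝ 1 τ ∧ τ 0 = 0 ∧ (∀ x > (0:ℝ), 0 < deriv τ x) ∧ Tendsto τ atTop atTop

/-- The growth condition (1.3): for all `a ≥ 0`,
`max_j e^{t_j(t) a} = o(min_i ⟨f_i(e^{t_i(t) ξ(0)})⟩)` as `t → ∞`
(stated pairwise, which is equivalent for finitely many indices). -/
def GrowthCond {Ω : Type*} [MeasurableSpace Ω] (P : Measure Ω) {d : ℕ}
    (ξ : Ω → (Fin d → ℤ) → ℝ) {p : ℕ} (f τ : Fin p → ℝ → ℝ) : Prop :=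
  ∀ a ≥ (0:ℝ), ∀ j i : Fin p,
    (fun t => Real.exp (τ j t * a)) =o[atTop]
      (fun t => ∫ ω, f i (Real.exp (τ i t * ξ ω 0)) ∂P)

/-- `R_t = t·(log t)²`. -/
def Rt (t : ℝ) : ℝ := t * (Real.log t) ^ 2

/-- A positive function `g` with `g(t) = o(t)` is self-neglecting if
`g(t + a g(t)) ~ g(t)` as `t → ∞`, locally uniformly in `a ∈ (0,∞)`. -/
def SelfNeglecting (g : ℝ → ℝ) : Prop :=
  g =o[atTop] (fun t => t) ∧
  ∀ K : Set ℝ, IsCompact K → K ⊆ Set.Ioi 0 →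
    TendstoUniformlyOn (fun t a => g (t + a * g t) / g t) (fun _ => 1) atTop K

/-- Pearson correlation coefficient of two random variables. -/
def pearson {Ω : Type*} [MeasurableSpace Ω] (P : Measure Ω) (X Y : Ω → ℝ) : ℝ :=
  (∫ ω, (X ω - ∫ x, X x ∂P) * (Y ω - ∫ x, Y x ∂P) ∂P) /
    Real.sqrt ((∫ ω, (X ω - ∫ x, X x ∂P) ^ 2 ∂P) * (∫ ω, (Y ω - ∫ x, Y x ∂P) ^ 2 ∂P))

namespace Stmt4Aux

lemma norm1_nonneg {d : ℕ} (x : Fin d → ℤ) : 0 ≤ norm1 x :=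
  Finset.sum_nonneg fun _ _ => abs_nonneg _

lemma norm1_eq_zero {d : ℕ} {x : Fin d → ℤ} (h : norm1 x = 0) : x = 0 := by
  funext i
  have := (Finset.sum_eq_zero_iff_of_nonneg (fun i _ => abs_nonneg (x i))).1 h i
    (Finset.mem_univ i)
  simpa [abs_eq_zero] using this

lemma norm1_triangle {d : ℕ} (x y : Fin d → ℤ) :
    norm1 (x + y) ≤ norm1 x + norm1 y := by
  rw [norm1, norm1, norm1, ← Finset.sum_add_distrib]
  exact Finset.sum_le_sum fun i _ => abs_add_le _ _

lemma mem_cube_iff {d : ℕ} {R : ℝ} {x : Fin d → ℤ} :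
    x ∈ cube d R ↔ ∀ i, -(⌈R⌉ : ℤ) ≤ x i ∧ x i ≤ ⌈R⌉ := by
  simp [cube, Fintype.mem_piFinset, Finset.mem_Icc]

lemma zero_mem_cube {d : ℕ} {R : ℝ} (hR : 1 ≤ R) : (0 : Fin d → ℤ) ∈ cube d R := by
  have h1 : (0 : ℤ) < ⌈R⌉ := Int.ceil_pos.2 (by linarith)
  rw [mem_cube_iff]
  intro i
  simp only [Pi.zero_apply]
  omega

/-- Neighbours of `x` inside the cube number at most `2d`. -/
lemma filter_nbr_card_le (d : ℕ) (R : ℝ) (x : Fin d → ℤ) :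
    ((cube d R).filter fun y => norm1 (x - y) = 1).card ≤ 2 * d := by
  classical
  have hsub : ((cube d R).filter fun y => norm1 (x - y) = 1) ⊆
      (Finset.univ : Finset (Fin d × Bool)).image
        (fun p => Function.update x p.1 (x p.1 + if p.2 then 1 else -1)) := by
    intro y hy
    have h1 : norm1 (x - y) = 1 := (Finset.mem_filter.1 hy).2
    have hsum : ∑ j, |x j - y j| = 1 := by
      simpa [norm1, Pi.sub_apply] using h1
    have hsumne : (∑ j, |x j - y j|) ≠ (0:ℤ) := by rw [hsum]; norm_num
    obtain ⟨i, -, hi⟩ := Finset.exists_ne_zero_of_sum_ne_zero hsumne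
    have hne : x i - y i ≠ 0 := fun h => hi (by rw [h]; simp)
    have hle : |x i - y i| ≤ 1 := by
      rw [← hsum]
      exact Finset.single_le_sum (f := fun j => |x j - y j|)
        (fun j _ => abs_nonneg _) (Finset.mem_univ i)
    have hione : |x i - y i| = 1 := le_antisymm hle (Int.one_le_abs hne)
    have hrest : ∀ j, j ≠ i → y j = x j := by
      intro j hj
      have h0 : ∑ k ∈ Finset.univ.erase i, |x k - y k| = 0 := by
        have h2 := Finset.add_sum_erase Finset.univ (fun k => |x k - y k|)
          (Finset.mem_univ i)
        have h3 : |x i - y i| + ∑ k ∈ Finset.univ.erase i, |x k - y k| = 1 := by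
          rw [← hsum]; exact h2
        rw [hione] at h3
        omega
      have := (Finset.sum_eq_zero_iff_of_nonneg fun k _ => abs_nonneg _).1 h0 j
        (Finset.mem_erase.2 ⟨hj, Finset.mem_univ j⟩)
      have := abs_eq_zero.1 this
      omega
    rcases abs_eq (by norm_num : (0:ℤ) ≤ 1) |>.1 hione with hcase | hcase
    · -- x i - y i = 1, so y i = x i - 1
      refine Finset.mem_image.2 ⟨(i, false), Finset.mem_univ _, ?_⟩
      show Function.update x i (x i + if (false : Bool) = true then 1 else -1) = y
      rw [if_neg Bool.false_ne_true]
      funext j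
      by_cases hji : j = i
      · subst hji; rw [Function.update_self]; omega
      · rw [Function.update_of_ne hji]; exact (hrest j hji).symm
    · refine Finset.mem_image.2 ⟨(i, true), Finset.mem_univ _, ?_⟩
      show Function.update x i (x i + if (true : Bool) = true then 1 else -1) = y
      rw [if_pos rfl]
      funext j
      by_cases hji : j = i
      · subst hji; rw [Function.update_self]; omega
      · rw [Function.update_of_ne hji]; exact (hrest j hji).symm
  calc ((cube d R).filter fun y => norm1 (x - y) = 1).card
      ≤ ((Finset.univ : Finset (Fin d × Bool)).image _).card := Finset.card_le_card hsub
    _ ≤ (Finset.univ : Finset (Fin d × Bool)).card := Finset.card_image_le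
    _ = 2 * d := by simp [Fintype.card_prod]; ring

lemma degIn_le (d : ℕ) (R : ℝ) (x : Fin d → ℤ) : degIn d R x ≤ 2 * d :=
  filter_nbr_card_le d R x

lemma subtype_filter_card_le (d : ℕ) (R : ℝ) (x : Fin d → ℤ) :
    (Finset.univ.filter fun y : cube d R => norm1 (x - (y : Fin d → ℤ)) = 1).card ≤
      degIn d R x := by
  classical
  unfold degIn
  exact Finset.card_le_card_of_injOn Subtype.val
    (fun a ha => Finset.mem_filter.2 ⟨a.2, (Finset.mem_filter.1 ha).2⟩)
    (fun a _ b _ hab => Subtype.ext hab)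

/-- Pointwise formula for the Hamiltonian applied to a vector. -/
lemma ham_apply {d : ℕ} (κ R : ℝ) (ξ : (Fin d → ℤ) → ℝ) (free : Bool)
    (e : cube d R → ℝ) (x : cube d R) :
    (ham d κ R ξ free *ᵥ e) x =
      κ * (∑ y ∈ Finset.univ.filter
          (fun y : cube d R => norm1 ((x : Fin d → ℤ) - (y : Fin d → ℤ)) = 1), e y)
      + (ξ (x : Fin d → ℤ) -
          κ * (if free then (degIn d R (x : Fin d → ℤ) : ℝ) else (2 * d : ℝ))) * e x := by
  classical
  unfold ham
  rw [Matrix.mulVec]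
  simp only [Matrix.of_apply, dotProduct, add_mul]
  rw [Finset.sum_add_distrib]
  congr 1
  · rw [Finset.mul_sum, Finset.sum_filter]
    exact Finset.sum_congr rfl fun y _ => by split <;> simp
  · have : ∀ y : cube d R,
        (if x = y then ξ (x : Fin d → ℤ) -
          κ * (if free then (degIn d R (x : Fin d → ℤ) : ℝ) else (2 * d : ℝ)) else 0) * e y
        = (if x = y then (ξ (x : Fin d → ℤ) -
          κ * (if free then (degIn d R (x : Fin d → ℤ) : ℝ) else (2 * d : ℝ))) * e y else 0) := by
      intro y; split <;> simp
    rw [Finset.sum_congr rfl fun y _ => this y, Finset.sum_ite_eq]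
    simp

end Stmt4Aux

open Stmt4Aux

/-- If the potential has a gap `ξ(0) − max_{x ≠ 0} ξ(x) > c > 2dκ`,
then the nonnegative ℓ²-normalized principal eigenfunction of the Anderson
Hamiltonian (either boundary condition) decays exponentially:
`e_1^{R,*}(x) ≤ K e^{−|x|₁ log(c/(2dκ))}` with `K = 1/(1 − 2dκ/c)`. -/
theorem stmt4 (d : ℕ) (hd : 1 ≤ d) (κ R c : ℝ) (hκ : 0 < κ) (hR : 1 ≤ R)
    (hc : 2 * d * κ < c)
    (ξ : (Fin d → ℤ) → ℝ) (hnn : ∀ x, 0 ≤ ξ x)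
    (hgap : c < ξ 0 - xiHat d R ξ)
    (free : Bool)
    (e : (cube d R) → ℝ)
    (heig : (ham d κ R ξ free) *ᵥ e = lam1 d κ R ξ free • e)
    (hpos : ∀ x, 0 ≤ e x)
    (hnorm : ∑ x, (e x) ^ 2 = 1) :
    ∀ x : cube d R,
      e x ≤ (1 - 2 * d * κ / c)⁻¹ *
        Real.exp (-(norm1 (x : Fin d → ℤ) : ℝ) * Real.log (c / (2 * d * κ))) := by
  classical
  have hdpos : (0:ℝ) < (d:ℝ) := by exact_mod_cast hd
  have hEpos : (0:ℝ) < 2 * d * κ := by positivity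
  have hcpos : (0:ℝ) < c := lt_trans hEpos hc
  set ρ : ℝ := 2 * d * κ / c with hρdef
  have hρpos : 0 < ρ := div_pos hEpos hcpos
  have hρlt : ρ < 1 := (div_lt_one hcpos).2 hc
  set D : cube d R → ℝ :=
    fun z => if free then (degIn d R (z : Fin d → ℤ) : ℝ) else (2 * d : ℝ) with hDdef
  have hD2d : ∀ z : cube d R, D z ≤ 2 * d := by
    intro z
    rw [hDdef]
    dsimp only
    split
    · exact_mod_cast degIn_le d R _
    · exact le_refl _
  have hD0 : ∀ z : cube d R, 0 ≤ D z := by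
    intro z
    rw [hDdef]
    dsimp only
    split
    · positivity
    · positivity
  -- the eigenvalue equation, rearranged
  have key : ∀ z : cube d R,
      (lam1 d κ R ξ free - ξ (z : Fin d → ℤ) + κ * D z) * e z =
        κ * (∑ y ∈ Finset.univ.filter
          (fun y : cube d R => norm1 ((z : Fin d → ℤ) - (y : Fin d → ℤ)) = 1), e y) := by
    intro z
    have h := congrFun heig z
    rw [ham_apply] at h
    rw [Pi.smul_apply, smul_eq_mul] at h
    rw [hDdef]
    linear_combination -h
  -- sums of e over any finset are nonnegative
  have hSnn : ∀ s : Finset (cube d R), 0 ≤ ∑ y ∈ s, e y :=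
    fun s => Finset.sum_nonneg fun y _ => hpos y
  -- each entry is at most 1
  have he1 : ∀ z : cube d R, e z ≤ 1 := by
    intro z
    have h2 : e z ^ 2 ≤ 1 := by
      rw [← hnorm]
      exact Finset.single_le_sum (fun y _ => sq_nonneg (e y)) (Finset.mem_univ z)
    nlinarith [hpos z]
  have h0 : (0 : Fin d → ℤ) ∈ cube d R := zero_mem_cube hR
  -- positivity of e at the origin
  have he0 : 0 < e ⟨0, h0⟩ := by
    rcases (hpos ⟨0, h0⟩).lt_or_eq with h | h
    · exact h
    · exfalso
      have hall : ∀ n : ℕ, ∀ z : cube d R, norm1 (z : Fin d → ℤ) ≤ n → e z = 0 := by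
        intro n
        induction n with
        | zero =>
          intro z hz
          have hz0 : (z : Fin d → ℤ) = 0 :=
            norm1_eq_zero (le_antisymm (by exact_mod_cast hz) (norm1_nonneg _))
          have : z = ⟨0, h0⟩ := Subtype.ext hz0
          rw [this]; exact h.symm
        | succ n ih =>
          intro z hz
          rcases le_or_gt (norm1 (z : Fin d → ℤ)) n with hle | hgt
          · exact ih z (by exact_mod_cast hle)
          have hzn : norm1 (z : Fin d → ℤ) = (n:ℤ) + 1 := by omega
          set zi : Fin d → ℤ := (z : Fin d → ℤ) with hzi
          have hn00 : norm1 (0 : Fin d → ℤ) = 0 := by simp [norm1]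
          have hzne : zi ≠ 0 := by
            intro hz0
            rw [hz0, hn00] at hzn
            omega
          have hex : ∃ i, zi i ≠ 0 := by
            by_contra hc'
            push_neg at hc'
            exact hzne (funext hc')
          obtain ⟨i, hine⟩ := hex
          set t : ℤ := if 0 < zi i then zi i - 1 else zi i + 1 with htdef
          set y : Fin d → ℤ := Function.update zi i t with hydef
          have hbz : ∀ j, -(⌈R⌉ : ℤ) ≤ zi j ∧ zi j ≤ ⌈R⌉ := by
            rw [hzi]; exact mem_cube_iff.1 z.2
          have hyQ : y ∈ cube d R := by
            rw [mem_cube_iff]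
            intro j
            by_cases hji : j = i
            · subst hji
              rw [hydef, Function.update_self, htdef]
              have := hbz j
              split <;> omega
            · rw [hydef, Function.update_of_ne hji]
              exact hbz j
          have habs : |t| = |zi i| - 1 := by
            rw [htdef]
            by_cases hp : 0 < zi i
            · rw [if_pos hp, abs_of_nonneg (by omega), abs_of_pos hp]
            · have hn : zi i < 0 := by omega
              rw [if_neg hp, abs_of_nonpos (by omega), abs_of_neg hn]
              ring
          have hsplit : ∀ w : Fin d → ℤ,
              norm1 w = |w i| + ∑ j ∈ Finset.univ.erase i, |w j| := by
            intro w
            rw [norm1, ← Finset.add_sum_erase _ _ (Finset.mem_univ i)]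
          have hny : norm1 y = (n:ℤ) := by
            rw [hsplit y]
            have h1 : ∑ j ∈ Finset.univ.erase i, |y j| =
                ∑ j ∈ Finset.univ.erase i, |zi j| :=
              Finset.sum_congr rfl fun j hj => by
                rw [hydef, Function.update_of_ne (Finset.mem_erase.1 hj).1]
            rw [h1]
            have h2 := hsplit zi
            rw [hydef, Function.update_self, habs]
            omega
          have hadj : norm1 (y - zi) = 1 := by
            rw [hsplit (y - zi)]
            have h1 : ∑ j ∈ Finset.univ.erase i, |(y - zi) j| = 0 := by
              apply Finset.sum_eq_zero
              intro j hj
              rw [Pi.sub_apply, hydef, Function.update_of_ne (Finset.mem_erase.1 hj).1]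
              simp
            rw [h1, Pi.sub_apply, hydef, Function.update_self, htdef]
            split <;> simp
          have hey : e ⟨y, hyQ⟩ = 0 := ih ⟨y, hyQ⟩ (le_of_eq hny)
          have hk := key ⟨y, hyQ⟩
          rw [hey, mul_zero] at hk
          have hS0 : ∑ w ∈ Finset.univ.filter
              (fun w : cube d R =>
                norm1 (((⟨y, hyQ⟩ : cube d R) : Fin d → ℤ) - (w : Fin d → ℤ)) = 1), e w = 0 := by
            rcases mul_eq_zero.1 hk.symm with h' | h'
            · exact absurd h' (ne_of_gt hκ)
            · exact h'
          have hmem : z ∈ Finset.univ.filter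
              (fun w : cube d R =>
                norm1 (((⟨y, hyQ⟩ : cube d R) : Fin d → ℤ) - (w : Fin d → ℤ)) = 1) := by
            refine Finset.mem_filter.2 ⟨Finset.mem_univ _, ?_⟩
            exact hadj
          exact (Finset.sum_eq_zero_iff_of_nonneg fun w _ => hpos w).1 hS0 z hmem
      have hzero : ∀ w : cube d R, e w = 0 := fun w =>
        hall (norm1 (w : Fin d → ℤ)).toNat w (Int.self_le_toNat _)
      rw [Finset.sum_eq_zero (fun w _ => by rw [hzero w]; ring)] at hnorm
      norm_num at hnorm
  -- lower bound on the principal eigenvalue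
  have hlamge : ξ 0 - 2 * d * κ ≤ lam1 d κ R ξ free := by
    have hk := key ⟨0, h0⟩
    have hcoe : ((⟨0, h0⟩ : cube d R) : Fin d → ℤ) = 0 := rfl
    rw [hcoe] at hk
    have hS := hSnn (Finset.univ.filter
      (fun y : cube d R => norm1 ((0 : Fin d → ℤ) - (y : Fin d → ℤ)) = 1))
    have hcoef : 0 ≤ lam1 d κ R ξ free - ξ 0 + κ * D ⟨0, h0⟩ := by
      by_contra hneg
      push_neg at hneg
      nlinarith [mul_nonneg hκ.le hS]
    nlinarith [hD2d ⟨0, h0⟩, hκ.le, mul_le_mul_of_nonneg_left (hD2d ⟨0, h0⟩) hκ.le]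
  -- bound on the potential away from the origin
  have hxihat : ∀ z : cube d R, (z : Fin d → ℤ) ≠ 0 → ξ (z : Fin d → ℤ) ≤ xiHat d R ξ := by
    intro z hz
    apply le_csSup
    · exact Set.Finite.bddAbove (((cube d R).finite_toSet.diff).image ξ)
    · exact ⟨(z : Fin d → ℤ), ⟨Finset.mem_coe.2 z.2, hz⟩, rfl⟩
  -- the main induction: exponential decay
  have main : ∀ n : ℕ, ∀ z : cube d R,
      (n : ℤ) ≤ norm1 (z : Fin d → ℤ) → e z ≤ ρ ^ n := by
    intro n
    induction n with
    | zero => intro z _; simpa using he1 z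
    | succ n ih =>
      intro z hz
      have hzne : (z : Fin d → ℤ) ≠ 0 := by
        intro hz0
        have hn00 : norm1 (0 : Fin d → ℤ) = 0 := by simp [norm1]
        rw [hz0, hn00] at hz
        omega
      have hk := key z
      set S : ℝ := ∑ y ∈ Finset.univ.filter
          (fun y : cube d R => norm1 ((z : Fin d → ℤ) - (y : Fin d → ℤ)) = 1), e y with hSdef
      have hρn : (0:ℝ) ≤ ρ ^ n := by positivity
      have hSle : S ≤ D z * ρ ^ n := by
        rw [hSdef]
        calc (∑ y ∈ Finset.univ.filter
              (fun y : cube d R => norm1 ((z : Fin d → ℤ) - (y : Fin d → ℤ)) = 1), e y)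
            ≤ ∑ _y ∈ Finset.univ.filter
              (fun y : cube d R => norm1 ((z : Fin d → ℤ) - (y : Fin d → ℤ)) = 1), ρ ^ n := by
              apply Finset.sum_le_sum
              intro y hy
              apply ih
              have hyadj : norm1 ((z : Fin d → ℤ) - (y : Fin d → ℤ)) = 1 :=
                (Finset.mem_filter.1 hy).2
              have htri := norm1_triangle ((z : Fin d → ℤ) - (y : Fin d → ℤ)) (y : Fin d → ℤ)
              rw [sub_add_cancel, hyadj] at htri
              omega
          _ = ((Finset.univ.filter
              (fun y : cube d R => norm1 ((z : Fin d → ℤ) - (y : Fin d → ℤ)) = 1)).card : ℝ)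
                * ρ ^ n := by rw [Finset.sum_const, nsmul_eq_mul]
          _ ≤ D z * ρ ^ n := by
              apply mul_le_mul_of_nonneg_right _ hρn
              rw [hDdef]
              dsimp only
              split
              · exact_mod_cast subtype_filter_card_le d R (z : Fin d → ℤ)
              · calc ((Finset.univ.filter
                    (fun y : cube d R =>
                      norm1 ((z : Fin d → ℤ) - (y : Fin d → ℤ)) = 1)).card : ℝ)
                    ≤ (degIn d R (z : Fin d → ℤ) : ℝ) := by
                      exact_mod_cast subtype_filter_card_le d R (z : Fin d → ℤ)
                  _ ≤ (2 * d : ℝ) := by exact_mod_cast degIn_le d R (z : Fin d → ℤ)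
      set A : ℝ := c - 2 * d * κ + κ * D z with hAdef
      have hA : 0 < A := by
        have := hD0 z
        have := mul_nonneg hκ.le (hD0 z)
        rw [hAdef]; linarith
      have hcoef : A ≤ lam1 d κ R ξ free - ξ (z : Fin d → ℤ) + κ * D z := by
        have h1 := hxihat z hzne
        rw [hAdef]
        linarith [hlamge, hgap]
      have hκD : κ * D z ≤ 2 * d * κ := by
        have := mul_le_mul_of_nonneg_left (hD2d z) hκ.le
        linarith
      have hkey2 : κ * D z ≤ A * ρ := by
        rw [hρdef, hAdef]
        rw [mul_div_assoc']
        rw [le_div_iff₀ hcpos]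
        nlinarith [mul_nonneg (sub_nonneg.2 hc.le) (sub_nonneg.2 hκD)]
      have h1 : A * e z ≤ κ * (D z * ρ ^ n) := by
        calc A * e z ≤ (lam1 d κ R ξ free - ξ (z : Fin d → ℤ) + κ * D z) * e z :=
              mul_le_mul_of_nonneg_right hcoef (hpos z)
          _ = κ * S := hk
          _ ≤ κ * (D z * ρ ^ n) := mul_le_mul_of_nonneg_left hSle hκ.le
      have h3 : A * e z ≤ A * (ρ * ρ ^ n) := by
        calc A * e z ≤ κ * (D z * ρ ^ n) := h1
          _ = κ * D z * ρ ^ n := by ring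
          _ ≤ A * ρ * ρ ^ n := mul_le_mul_of_nonneg_right hkey2 hρn
          _ = A * (ρ * ρ ^ n) := by ring
      have h4 := le_of_mul_le_mul_left h3 hA
      rw [pow_succ]
      linarith
  -- conclude
  intro x
  set n : ℕ := (norm1 (x : Fin d → ℤ)).toNat with hndef
  have hx : e x ≤ ρ ^ n := main n x (by
    rw [hndef]
    exact le_of_eq (Int.toNat_of_nonneg (norm1_nonneg _)))
  have hmn : ((norm1 (x : Fin d → ℤ) : ℤ) : ℝ) = (n : ℝ) := by
    rw [hndef]
    exact_mod_cast (Int.toNat_of_nonneg (norm1_nonneg _)).symm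
  have hexp : Real.exp (-(norm1 (x : Fin d → ℤ) : ℝ) * Real.log (c / (2 * d * κ))) = ρ ^ n := by
    rw [hmn]
    have hlog : -(n : ℝ) * Real.log (c / (2 * d * κ)) = (n : ℝ) * Real.log ρ := by
      rw [hρdef]
      rw [show (2 * (d:ℝ) * κ / c) = (c / (2 * d * κ))⁻¹ by
        rw [inv_div]]
      rw [Real.log_inv]
      ring
    rw [hlog, Real.exp_nat_mul, Real.exp_log hρpos]
  have hK : 1 ≤ (1 - 2 * (d:ℝ) * κ / c)⁻¹ := by
    rw [← hρdef]
    exact one_le_inv₀ (by linarith) |>.2 (by linarith)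
  calc e x ≤ ρ ^ n := hx
    _ = Real.exp (-(norm1 (x : Fin d → ℤ) : ℝ) * Real.log (c / (2 * d * κ))) := hexp.symm
    _ ≤ (1 - 2 * d * κ / c)⁻¹ *
        Real.exp (-(norm1 (x : Fin d → ℤ) : ℝ) * Real.log (c / (2 * d * κ))) := by
      nlinarith [Real.exp_pos (-(norm1 (x : Fin d → ℤ) : ℝ) * Real.log (c / (2 * d * κ))), hK]
end
end

section
/- Let d ≥ 1 be an integer, β > 0, and let f : (0,∞) → (0,∞) be non-decreasing and regularly varying at infinity of index β, i.e. f(x) = x^β L(x) where L is slowly varying, and assume L is non-decreasing or bounded away from zero and infinity on (0,∞). Let g : (0,∞) → ℝ be continuous with g(t) → ∞ as t → ∞. Then for every c > 0, lim_{t→∞} (Σ_{x ∈ ℤ^d} f(e^{g(t) − c|x|₁})) / f(e^{g(t)}) = C(c), where C(c) := Σ_{x ∈ ℤ^d} e^{−βc|x|₁} < ∞; moreover C(c) → 1 as c → ∞. -/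
open MeasureTheory ProbabilityTheory Filter Asymptotics Real Matrix
open scoped BigOperators ENNReal

noncomputable section

lemma norm1_nonneg' {d : ℕ} (x : Fin d → ℤ) : 0 ≤ norm1 x :=
  Finset.sum_nonneg fun _ _ => abs_nonneg _

lemma one_le_norm1' {d : ℕ} {x : Fin d → ℤ} (hx : x ≠ 0) : 1 ≤ norm1 x := by
  obtain ⟨i, hi⟩ : ∃ i, x i ≠ 0 := by
    by_contra h; push_neg at h; exact hx (funext h)
  calc (1:ℤ) ≤ |x i| := Int.one_le_abs (by simpa using hi)
    _ ≤ norm1 x := by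
      simpa [norm1] using Finset.single_le_sum (f := fun j => |x j|)
        (fun j _ => abs_nonneg _) (Finset.mem_univ i)

lemma summable_exp_norm1 (d : ℕ) {a : ℝ} (ha : 0 < a) :
    Summable (fun x : Fin d → ℤ => Real.exp (-(a * (norm1 x : ℝ)))) := by
  induction d with
  | zero => exact Summable.of_finite
  | succ n ih =>
    have hnat : Summable (fun k : ℕ => Real.exp (-(a * (k : ℝ)))) := by
      have hlt : Real.exp (-a) < 1 := Real.exp_lt_one_iff.mpr (by linarith)
      have := summable_geometric_of_lt_one (Real.exp_pos (-a)).le hlt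
      refine this.congr fun k => ?_
      rw [← Real.exp_nat_mul]; ring_nf
    have hz : Summable (fun k : ℤ => Real.exp (-(a * (|k| : ℝ)))) := by
      apply Summable.of_nat_of_neg
      · refine hnat.congr fun k => ?_; simp
      · refine hnat.congr fun k => ?_; simp
    have hprod := hz.mul_of_nonneg ih (fun _ => (Real.exp_pos _).le)
      (fun _ => (Real.exp_pos _).le)
    refine ((Fin.consEquiv (fun _ : Fin (n+1) => ℤ)).summable_iff).mp ?_
    refine hprod.congr fun p => ?_
    show Real.exp (-(a * (|p.1| : ℝ))) * Real.exp (-(a * (norm1 p.2 : ℝ)))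
      = Real.exp (-(a * (norm1 (Fin.cons p.1 p.2) : ℝ)))
    rw [← Real.exp_add]
    congr 1
    have : norm1 (Fin.cons p.1 p.2) = |p.1| + norm1 p.2 := by
      simp [norm1, Fin.sum_univ_succ]
    rw [this]
    push_cast
    ring

/-- For a non-decreasing regularly varying function `f` of
index `β > 0` (with slowly varying part non-decreasing or bounded away from
`0` and `∞`) and `g` continuous with `g(t) → ∞`, for every `c > 0`:
`Σ_{x ∈ ℤ^d} f(e^{g(t) − c|x|₁}) / f(e^{g(t)}) → C(c) = Σ_x e^{−βc|x|₁} < ∞`,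
and `C(c) → 1` as `c → ∞`. -/
theorem stmt5 (d : ℕ) (hd : 1 ≤ d) (β : ℝ) (hβ : 0 < β)
    (f : ℝ → ℝ) (hmono : MonotoneOn f (Set.Ioi 0)) (hfpos : ∀ x > (0:ℝ), 0 < f x)
    (L : ℝ → ℝ) (hL : SlowlyVarying L) (hfL : ∀ x > (0:ℝ), f x = x ^ β * L x)
    (hLreg : MonotoneOn L (Set.Ioi 0) ∨ ∃ m M : ℝ, 0 < m ∧ ∀ x > (0:ℝ), m ≤ L x ∧ L x ≤ M)
    (g : ℝ → ℝ) (hg : Continuous g) (hgt : Tendsto g atTop atTop)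
    (c : ℝ) (hc : 0 < c) :
    Summable (fun x : Fin d → ℤ => Real.exp (-(β * c * (norm1 x : ℝ)))) ∧
    Tendsto (fun t =>
        (∑' x : Fin d → ℤ, f (Real.exp (g t - c * (norm1 x : ℝ)))) / f (Real.exp (g t)))
      atTop (nhds (∑' x : Fin d → ℤ, Real.exp (-(β * c * (norm1 x : ℝ))))) ∧
    Tendsto (fun c' : ℝ => ∑' x : Fin d → ℤ, Real.exp (-(β * c' * (norm1 x : ℝ))))
      atTop (nhds 1) := by
  classical
  -- positivity of L on (0,∞)
  have hLpos : ∀ x > (0:ℝ), 0 < L x := by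
    intro x hx
    have h2 := hfL x hx
    have hx' : (0:ℝ) < x ^ β := Real.rpow_pos_of_pos hx β
    nlinarith [hfpos x hx]
  -- domination constant
  obtain ⟨K, hK0, hKb⟩ : ∃ K : ℝ, 0 ≤ K ∧
      ∀ y > (0:ℝ), ∀ l : ℝ, 0 < l → l ≤ 1 → L (l * y) / L y ≤ K := by
    rcases hLreg with hmon | ⟨m, M, hm, hb⟩
    · refine ⟨1, zero_le_one, fun y hy l hl hl1 => ?_⟩
      rw [div_le_one (hLpos y hy)]
      exact hmon (Set.mem_Ioi.mpr (mul_pos hl hy)) (Set.mem_Ioi.mpr hy) (by nlinarith)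
    · refine ⟨M / m, ?_, fun y hy l hl hl1 => ?_⟩
      · have h1 := hb 1 one_pos
        have : (0:ℝ) ≤ M := by linarith [h1.1, h1.2]
        positivity
      · have h1 := hb (l * y) (mul_pos hl hy)
        have h2 := hb y hy
        exact div_le_div₀ (by linarith [h1.1, h1.2]) h1.2 hm h2.1
  -- the key ratio identity
  have hratio : ∀ s a : ℝ,
      f (Real.exp (s - a)) / f (Real.exp s)
        = Real.exp (-(β * a)) * (L (Real.exp (-a) * Real.exp s) / L (Real.exp s)) := by
    intro s a
    have h1 : Real.exp (s - a) = Real.exp (-a) * Real.exp s := by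
      rw [← Real.exp_add]; ring_nf
    rw [hfL _ (Real.exp_pos _), hfL _ (Real.exp_pos _), h1, mul_div_mul_comm, ← h1]
    congr 1
    rw [Real.rpow_def_of_pos (Real.exp_pos _), Real.rpow_def_of_pos (Real.exp_pos _),
      Real.log_exp, Real.log_exp, ← Real.exp_sub]
    congr 1
    ring
  -- Part 1: summability
  have hsum : Summable (fun x : Fin d → ℤ => Real.exp (-(β * c * (norm1 x : ℝ)))) :=
    summable_exp_norm1 d (mul_pos hβ hc)
  refine ⟨hsum, ?_, ?_⟩
  -- Part 2: convergence of the ratio of sums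
  · have hgexp : Tendsto (fun t => Real.exp (g t)) atTop atTop :=
      Real.tendsto_exp_atTop.comp hgt
    have hmain : Tendsto (fun t => ∑' x : Fin d → ℤ,
        (f (Real.exp (g t - c * (norm1 x : ℝ))) / f (Real.exp (g t)))) atTop
        (nhds (∑' x : Fin d → ℤ, Real.exp (-(β * c * (norm1 x : ℝ))))) := by
      apply tendsto_tsum_of_dominated_convergence
        (bound := fun x : Fin d → ℤ => K * Real.exp (-(β * c * (norm1 x : ℝ))))
        (hsum.mul_left K)
      · intro x
        have hn : (0:ℝ) ≤ (norm1 x : ℝ) := by exact_mod_cast norm1_nonneg' x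
        have ha : (0:ℝ) ≤ c * (norm1 x : ℝ) := mul_nonneg hc.le hn
        have heq : ∀ t : ℝ, f (Real.exp (g t - c * (norm1 x : ℝ))) / f (Real.exp (g t))
            = Real.exp (-(β * (c * (norm1 x : ℝ)))) *
              (L (Real.exp (-(c * (norm1 x : ℝ))) * Real.exp (g t)) / L (Real.exp (g t))) :=
          fun t => hratio (g t) (c * (norm1 x : ℝ))
        simp only [heq]
        have h2 : Tendsto (fun t => L (Real.exp (-(c * (norm1 x : ℝ))) * Real.exp (g t)) /
            L (Real.exp (g t))) atTop (nhds 1) :=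
          (hL (Real.exp (-(c * (norm1 x : ℝ)))) (Real.exp_pos _)).comp hgexp
        have h3 := h2.const_mul (Real.exp (-(β * (c * (norm1 x : ℝ)))))
        rw [mul_one] at h3
        convert h3 using 2
        ring
      · filter_upwards with t
        intro x
        have hn : (0:ℝ) ≤ (norm1 x : ℝ) := by exact_mod_cast norm1_nonneg' x
        have ha : (0:ℝ) ≤ c * (norm1 x : ℝ) := mul_nonneg hc.le hn
        rw [Real.norm_eq_abs, abs_of_nonneg
          (div_nonneg (hfpos _ (Real.exp_pos _)).le (hfpos _ (Real.exp_pos _)).le)]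
        calc f (Real.exp (g t - c * (norm1 x : ℝ))) / f (Real.exp (g t))
            = Real.exp (-(β * (c * (norm1 x : ℝ)))) *
              (L (Real.exp (-(c * (norm1 x : ℝ))) * Real.exp (g t)) / L (Real.exp (g t))) :=
              hratio (g t) (c * (norm1 x : ℝ))
          _ ≤ Real.exp (-(β * (c * (norm1 x : ℝ)))) * K := by
              refine mul_le_mul_of_nonneg_left ?_ (Real.exp_pos _).le
              exact hKb _ (Real.exp_pos _) _ (Real.exp_pos _)
                (Real.exp_le_one_iff.mpr (by linarith))
          _ = K * Real.exp (-(β * c * (norm1 x : ℝ))) := by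
              rw [mul_comm]; ring_nf
    have : (fun t => (∑' x : Fin d → ℤ, f (Real.exp (g t - c * (norm1 x : ℝ)))) /
        f (Real.exp (g t))) = fun t => ∑' x : Fin d → ℤ,
        (f (Real.exp (g t - c * (norm1 x : ℝ))) / f (Real.exp (g t))) := by
      funext t; rw [tsum_div_const]
    rw [this]
    exact hmain
  -- Part 3: C(c') → 1 as c' → ∞
  · set S : ℝ := ∑' x : Fin d → ℤ, Real.exp (-(β * 1 * (norm1 x : ℝ))) with hS
    have hS1 : Summable (fun x : Fin d → ℤ => Real.exp (-(β * 1 * (norm1 x : ℝ)))) :=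
      summable_exp_norm1 d (by linarith)
    have hnorm0 : (norm1 (0 : Fin d → ℤ) : ℝ) = 0 := by simp [norm1]
    have key : ∀ c' : ℝ, 1 ≤ c' →
        1 ≤ (∑' x : Fin d → ℤ, Real.exp (-(β * c' * (norm1 x : ℝ)))) ∧
        (∑' x : Fin d → ℤ, Real.exp (-(β * c' * (norm1 x : ℝ)))) ≤
          1 + Real.exp (-(β * (c' - 1))) * S := by
      intro c' hc'
      have hsc : Summable (fun x : Fin d → ℤ => Real.exp (-(β * c' * (norm1 x : ℝ)))) :=
        summable_exp_norm1 d (mul_pos hβ (by linarith))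
      constructor
      · have h0 := Summable.le_tsum hsc 0 (fun _ _ => (Real.exp_pos _).le)
        rwa [hnorm0, mul_zero, neg_zero, Real.exp_zero] at h0
      · rw [Summable.tsum_eq_add_tsum_ite hsc 0, hnorm0, mul_zero, neg_zero, Real.exp_zero]
        gcongr 1 + ?_
        have hbd : ∀ x : Fin d → ℤ,
            (if x = 0 then 0 else Real.exp (-(β * c' * (norm1 x : ℝ)))) ≤
            Real.exp (-(β * (c' - 1))) * Real.exp (-(β * 1 * (norm1 x : ℝ))) := by
          intro x
          split_ifs with hx
          · positivity
          · have hn : (1:ℝ) ≤ (norm1 x : ℝ) := by exact_mod_cast one_le_norm1' hx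
            rw [← Real.exp_add]
            apply Real.exp_le_exp.mpr
            nlinarith [mul_nonneg (mul_nonneg hβ.le (sub_nonneg.mpr hc')) (sub_nonneg.mpr hn)]
        calc (∑' x : Fin d → ℤ, if x = 0 then 0 else Real.exp (-(β * c' * (norm1 x : ℝ))))
            ≤ ∑' x : Fin d → ℤ, Real.exp (-(β * (c' - 1))) *
              Real.exp (-(β * 1 * (norm1 x : ℝ))) := by
              refine Summable.tsum_le_tsum hbd ?_ (hS1.mul_left _)
              apply hsc.of_nonneg_of_le (fun x => by positivity)
              intro x; split_ifs <;> simp [(Real.exp_pos _).le]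
          _ = Real.exp (-(β * (c' - 1))) * S := tsum_mul_left
    have hupper : Tendsto (fun c' : ℝ => 1 + Real.exp (-(β * (c' - 1))) * S) atTop
        (nhds 1) := by
      have h1 : Tendsto (fun c' : ℝ => β * (c' - 1)) atTop atTop := by
        apply Tendsto.const_mul_atTop hβ
        exact tendsto_atTop_add_const_right _ (-1) tendsto_id
      have h2 : Tendsto (fun c' : ℝ => Real.exp (-(β * (c' - 1)))) atTop (nhds 0) :=
        Real.tendsto_exp_atBot.comp (tendsto_neg_atBot_iff.mpr h1)
      have h3 := (h2.mul_const S).const_add (1:ℝ)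
      simpa using h3
    refine tendsto_of_tendsto_of_tendsto_of_le_of_le' tendsto_const_nhds hupper ?_ ?_
    · filter_upwards [eventually_ge_atTop (1:ℝ)] with c' hc'
      exact (key c' hc').1
    · filter_upwards [eventually_ge_atTop (1:ℝ)] with c' hc'
      exact (key c' hc').2
end
end
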